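/- Let X₁, …, X_Z and U₁, …, U_Z be random variables on a probability space (Ω, P) such that the pairs (X_k, U_k), k = 1, …, Z, are independent and identically distributed, where X_k takes values in {1, …, N} with P(X₁ = n) = p_n, U_k takes values in a measurable space E, and X₁ is independent of U₁. Let C₁, …, C_N ⊆ E be measurable sets with P(U₁ ∈ C_n) = s_n. Then the expected cardinality of the set {n ∈ {1, …, N} : ∃ k ∈ {1, …, Z}, X_k = n and U_k ∉ C_n} equals Σ_{n=1}^{N} (1 − (1 − p_n · (1 − s_n))^Z). -/

import Mathlib

open MeasureTheory ProbabilityTheory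
open scoped ENNReal

/-- Each of Z users independently requests content X_k (with P(X₁ = n) = p_n) and
has a location U_k (with X₁ independent of U₁, the pairs being i.i.d.); C_n is the
region where content n is accessible from a cache, with P(U₁ ∈ C_n) = s_n. Then
the expected number of contents n requested at least once by a user outside C_n
equals Σ_{n=1}^{N} (1 − (1 − p_n (1 − s_n))^Z). -/
theorem expected_distinct_uncached_requests
    {Ω E : Type*} [MeasurableSpace Ω] [MeasurableSpace E]
    (P : Measure Ω) [IsProbabilityMeasure P]
    (Z : ℕ) (hZ : 0 < Z) (N : ℕ)
    (X : Fin Z → Ω → Fin N) (U : Fin Z → Ω → E)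
    (hXmeas : ∀ k, Measurable (X k)) (hUmeas : ∀ k, Measurable (U k))
    (hindep : iIndepFun
      (fun k ω => (X k ω, U k ω)) P)
    (hident : ∀ k, IdentDistrib (fun ω => (X k ω, U k ω))
      (fun ω => (X ⟨0, hZ⟩ ω, U ⟨0, hZ⟩ ω)) P P)
    (hXU : IndepFun (X ⟨0, hZ⟩) (U ⟨0, hZ⟩) P)
    (C : Fin N → Set E) (hC : ∀ n, MeasurableSet (C n))
    (p s : Fin N → ℝ≥0∞)
    (hp : ∀ n, P {ω | X ⟨0, hZ⟩ ω = n} = p n)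
    (hs : ∀ n, P (U ⟨0, hZ⟩ ⁻¹' C n) = s n) :
    ∫⁻ ω, (({n : Fin N | ∃ k, X k ω = n ∧ U k ω ∉ C n}.ncard : ℝ≥0∞)) ∂P =
      ∑ n, (1 - (1 - p n * (1 - s n)) ^ Z) := by
  classical
  set k0 : Fin Z := ⟨0, hZ⟩ with hk0
  -- the target set in the product space
  set D : Fin N → Set (Fin N × E) :=
    fun n => (Prod.fst ⁻¹' {n}) ∩ (Prod.snd ⁻¹' (C n)ᶜ) with hD
  have hDmeas : ∀ n, MeasurableSet (D n) := fun n =>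
    (measurable_fst (MeasurableSet.singleton n)).inter
      (measurable_snd (hC n).compl)
  -- the per-(n,k) events
  set A : Fin N → Fin Z → Set Ω :=
    fun n k => (fun ω => (X k ω, U k ω)) ⁻¹' D n with hA
  have hAmeas : ∀ n k, MeasurableSet (A n k) := fun n k =>
    ((hXmeas k).prodMk (hUmeas k)) (hDmeas n)
  have hAdef : ∀ n k ω, ω ∈ A n k ↔ (X k ω = n ∧ U k ω ∉ C n) := by
    intro n k ω
    simp [hA, hD]
  -- probability of a single event
  have hA0 : ∀ n, P (A n k0) = p n * (1 - s n) := by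
    intro n
    have : A n k0 = (X k0 ⁻¹' {n}) ∩ (U k0 ⁻¹' (C n)ᶜ) := by
      ext ω; simp [hA, hD]
    rw [this, hXU.measure_inter_preimage_eq_mul _ _ (MeasurableSet.singleton n)
      (hC n).compl]
    have h1 : X k0 ⁻¹' {n} = {ω | X k0 ω = n} := by ext ω; simp
    rw [h1, hp n, Set.preimage_compl, prob_compl_eq_one_sub ((hUmeas k0) (hC n)),
      hs n]
  have hAk : ∀ n k, P (A n k) = p n * (1 - s n) := by
    intro n k
    rw [← hA0 n]
    exact (hident k).measure_mem_eq (hDmeas n)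
  -- probability of the union over k
  have hUnion : ∀ n, P (⋃ k, A n k) = 1 - (1 - p n * (1 - s n)) ^ Z := by
    intro n
    have hcompl : (⋃ k, A n k)ᶜ = ⋂ k, (A n k)ᶜ := by
      simp [Set.compl_iUnion]
    have hprod : P (⋂ k, (A n k)ᶜ) = ∏ k : Fin Z, P ((A n k)ᶜ) := by
      refine hindep.meas_iInter fun k => ?_
      exact ⟨(D n)ᶜ, (hDmeas n).compl, rfl⟩
    have hfac : ∀ k, P ((A n k)ᶜ) = 1 - p n * (1 - s n) := fun k => by
      rw [prob_compl_eq_one_sub (hAmeas n k), hAk n k]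
    have hval : P ((⋃ k, A n k)ᶜ) = (1 - p n * (1 - s n)) ^ Z := by
      rw [hcompl, hprod]
      simp [hfac]
    have := prob_compl_eq_one_sub (μ := P) (MeasurableSet.iUnion (hAmeas n))
    rw [hval] at this
    have hle : P (⋃ k, A n k) ≤ 1 := prob_le_one
    rw [this]
    exact (ENNReal.sub_sub_cancel ENNReal.one_ne_top hle).symm
  -- rewrite ncard as a sum of indicators
  have hcard : ∀ ω, (({n : Fin N | ∃ k, X k ω = n ∧ U k ω ∉ C n}.ncard : ℝ≥0∞))
      = ∑ n : Fin N, (⋃ k, A n k).indicator (fun _ => (1 : ℝ≥0∞)) ω := by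
    intro ω
    have hset : {n : Fin N | ∃ k, X k ω = n ∧ U k ω ∉ C n}
        = ↑(Finset.univ.filter fun n : Fin N => ω ∈ ⋃ k, A n k) := by
      ext n
      simp only [Set.mem_setOf_eq, Finset.coe_filter, Finset.mem_univ, true_and,
        Set.mem_iUnion]
      constructor
      · rintro ⟨k, hk⟩; exact ⟨k, (hAdef n k ω).2 hk⟩
      · rintro ⟨k, hk⟩; exact ⟨k, (hAdef n k ω).1 hk⟩
    rw [hset, Set.ncard_coe_finset, Finset.card_filter]
    push_cast
    refine Finset.sum_congr rfl fun n _ => ?_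
    by_cases h : ω ∈ ⋃ k, A n k <;> simp [h]
  calc ∫⁻ ω, (({n : Fin N | ∃ k, X k ω = n ∧ U k ω ∉ C n}.ncard : ℝ≥0∞)) ∂P
      = ∫⁻ ω, ∑ n : Fin N, (⋃ k, A n k).indicator (fun _ => (1 : ℝ≥0∞)) ω ∂P := by
        exact lintegral_congr hcard
    _ = ∑ n : Fin N, ∫⁻ ω, (⋃ k, A n k).indicator (fun _ => (1 : ℝ≥0∞)) ω ∂P := by
        refine lintegral_finset_sum _ fun n _ => ?_
        exact measurable_const.indicator (MeasurableSet.iUnion (hAmeas n))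
    _ = ∑ n : Fin N, P (⋃ k, A n k) := by
        refine Finset.sum_congr rfl fun n _ => ?_
        exact lintegral_indicator_one (MeasurableSet.iUnion (hAmeas n))
    _ = ∑ n, (1 - (1 - p n * (1 - s n)) ^ Z) :=
        Finset.sum_congr rfl fun n _ => hUnion n
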